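/- Define d : ℕ → ℚ by d(0) = 0, d(1) = 1, d(2N) = d(N), d(2N+1) = (d(N) + d(N+1) + 1)/2. Then d(N) ≤ (1/3)·log₂ N + 1 for all N ≥ 1. -/
import Mathlib

private lemma vdc_key (a b c : ℝ) (ha : 0 < a) (hb : 0 < b) (hc : 0 < c)
    (h : 8 * (a * b) ≤ c ^ 2) :
    Real.logb 2 a + Real.logb 2 b + 3 ≤ 2 * Real.logb 2 c := by
  have h2 : (1:ℝ) < 2 := by norm_num
  have hmono : Real.logb 2 (8 * (a * b)) ≤ Real.logb 2 (c ^ 2) :=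
    (Real.logb_le_logb h2 (by positivity) (by positivity)).2 h
  have e1 : Real.logb 2 (8 * (a * b)) = 3 + (Real.logb 2 a + Real.logb 2 b) := by
    rw [Real.logb_mul (by norm_num) (by positivity), Real.logb_mul ha.ne' hb.ne',
      show (8:ℝ) = 2 ^ (3:ℕ) by norm_num, Real.logb_pow, Real.logb_self_eq_one h2]
    push_cast; ring
  have e2 : Real.logb 2 (c ^ 2) = 2 * Real.logb 2 c := by
    rw [Real.logb_pow]; push_cast; ring
  rw [e1, e2] at hmono
  linarith

theorem vdc_discrepancy_upper_bound (d : ℕ → ℚ)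
    (h0 : d 0 = 0) (h1 : d 1 = 1)
    (heven : ∀ N : ℕ, d (2 * N) = d N)
    (hodd : ∀ N : ℕ, d (2 * N + 1) = (d N + d (N + 1) + 1) / 2)
    (N : ℕ) (hN : 1 ≤ N) :
    (d N : ℝ) ≤ Real.logb 2 N / 3 + 1 := by
  have h2 : (1:ℝ) < 2 := by norm_num
  have hevenR : ∀ M : ℕ, (d (2 * M) : ℝ) = (d M : ℝ) := fun M => by exact_mod_cast heven M
  have hoddR : ∀ M : ℕ, (d (2 * M + 1) : ℝ) = ((d M : ℝ) + (d (M + 1) : ℝ) + 1) / 2 := by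
    intro M; exact_mod_cast hodd M
  suffices H : ∀ N : ℕ,
      ((d N : ℝ) + (d (N + 1) : ℝ) ≤ 2 / 3 * Real.logb 2 (2 * N + 1) + 1) ∧
      (1 ≤ N → (d N : ℝ) ≤ Real.logb 2 N / 3 + 1) by
    exact (H N).2 hN
  intro N
  induction N using Nat.strong_induction_on with
  | _ N ih =>
    rcases Nat.eq_zero_or_pos N with rfl | hpos
    · constructor
      · have : (d 1 : ℝ) = 1 := by exact_mod_cast h1
        have h0' : (d 0 : ℝ) = 0 := by exact_mod_cast h0
        simp only [Nat.cast_zero, mul_zero, zero_add, Real.logb_one, h0', this]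
        norm_num
      · intro h; omega
    -- first prove the single bound S(N)
    have hS : (d N : ℝ) ≤ Real.logb 2 N / 3 + 1 := by
      rcases Nat.even_or_odd N with ⟨M, hM⟩ | ⟨M, hM⟩
      · -- N = 2M, M ≥ 1
        have hM1 : 1 ≤ M := by omega
        have hMlt : M < N := by omega
        have hSM := (ih M hMlt).2 hM1
        have hmono : Real.logb 2 (M:ℝ) ≤ Real.logb 2 (N:ℝ) :=
          (Real.logb_le_logb h2 (by exact_mod_cast hM1) (by exact_mod_cast hpos)).2
            (by exact_mod_cast Nat.le_of_lt hMlt)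
        have : (d N : ℝ) = (d M : ℝ) := by rw [show N = 2 * M by omega]; exact hevenR M
        rw [this]; linarith
      · -- N = 2M + 1
        have hMlt : M < N := by omega
        have hQM := (ih M hMlt).1
        have hd : (d N : ℝ) = ((d M : ℝ) + (d (M + 1) : ℝ) + 1) / 2 := by
          rw [show N = 2 * M + 1 by omega]; exact hoddR M
        have hN2 : N = 2 * M + 1 := by omega
        have hNc : (N : ℝ) = 2 * M + 1 := by exact_mod_cast hN2
        rw [hd, hNc]; linarith
    refine ⟨?_, fun _ => hS⟩
    -- now the pair bound Q(N)
    rcases Nat.even_or_odd N with ⟨M, hM⟩ | ⟨M, hM⟩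
    · -- N = 2M, M ≥ 1 : d N + d (N+1) = d M + (d M + d(M+1) + 1)/2
      have hM1 : 1 ≤ M := by omega
      have hMlt : M < N := by omega
      have hSM := (ih M hMlt).2 hM1
      have hQM := (ih M hMlt).1
      have e1 : (d N : ℝ) = (d M : ℝ) := by rw [show N = 2 * M by omega]; exact hevenR M
      have e2 : (d (N + 1) : ℝ) = ((d M : ℝ) + (d (M + 1) : ℝ) + 1) / 2 := by
        rw [show N + 1 = 2 * M + 1 by omega]; exact hoddR M
      have hkey := vdc_key (M:ℝ) (2 * M + 1) (2 * N + 1)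
        (by exact_mod_cast hM1) (by positivity) (by positivity)
        (by
          have hN2 : N = 2 * M := by omega
          have : (N : ℝ) = 2 * M := by exact_mod_cast hN2
          rw [this]; nlinarith [sq_nonneg ((M:ℝ))])
      rw [e1, e2]; linarith
    · -- N = 2M + 1 : d N + d (N+1) = (d M + d(M+1) + 1)/2 + d (M+1)
      have hMlt : M < N := by omega
      have hQM := (ih M hMlt).1
      have hSM1 : (d (M + 1) : ℝ) ≤ Real.logb 2 (M + 1 : ℕ) / 3 + 1 := by
        rcases lt_or_eq_of_le (show M + 1 ≤ N by omega) with h | h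
        · exact (ih (M + 1) h).2 (by omega)
        · rw [h]; exact hS
      have e1 : (d N : ℝ) = ((d M : ℝ) + (d (M + 1) : ℝ) + 1) / 2 := by
        rw [show N = 2 * M + 1 by omega]; exact hoddR M
      have e2 : (d (N + 1) : ℝ) = (d (M + 1) : ℝ) := by
        rw [show N + 1 = 2 * (M + 1) by omega]; exact hevenR (M + 1)
      have hkey := vdc_key (2 * M + 1) ((M + 1 : ℕ) : ℝ) (2 * N + 1)
        (by positivity) (by positivity) (by positivity)
        (by
          have hN2 : N = 2 * M + 1 := by omega
          have : (N : ℝ) = 2 * M + 1 := by exact_mod_cast hN2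
          push_cast
          rw [this]; nlinarith)
      rw [e1, e2]; linarith
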